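/- Under internal validity of the RCT, internal validity of the observational study, external validity (transportability of potential-outcome means), and overlap, the vector signal difference satisfies the conditional moment restrictions: for each a ∈ {0,1} and every x with P(X=x) > 0, E[ψ₁ᵃ − ψ₀ᵃ | X=x] = 0. -/

import Mathlib

open MeasureTheory

/-- Conditional expectation of `Z` given the event `E`: `E[Z | E] = (∫_E Z dP) / P(E)`. -/
noncomputable def eCond {Ω : Type*} [MeasurableSpace Ω] (P : Measure Ω) (E : Set Ω)
    (Z : Ω → ℝ) : ℝ :=
  (∫ ω in E, Z ω ∂P) / (P E).toReal

/-- Conditional probability of `E'` given the event `E`: `P(E' | E) = P(E' ∩ E) / P(E)`. -/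
noncomputable def pCond {Ω : Type*} [MeasurableSpace Ω] (P : Measure Ω) (E' E : Set Ω) : ℝ :=
  (P (E' ∩ E)).toReal / (P E).toReal

/-- The RCT potential-outcome signal
`ψ₀ᵃ = (1{S=0} / P(S=0 | X)) · Y · 1{A=a} / P(A=a | S=0)`. -/
noncomputable def psi0a {Ω 𝒳 : Type*} [MeasurableSpace Ω] (P : Measure Ω)
    (X : Ω → 𝒳) (S A : Ω → Fin 2) (Y : Ω → ℝ) (a : Fin 2) (ω : Ω) : ℝ :=
  ((if S ω = 0 then (1 : ℝ) else 0) / pCond P {ω' | S ω' = 0} {ω' | X ω' = X ω}) * Y ω *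
    (if A ω = a then (1 : ℝ) else 0) / pCond P {ω' | A ω' = a} {ω' | S ω' = 0}

/-- The response surface `μ_a(x) = E[Y | X=x, A=a, S=1]`. -/
noncomputable def mu {Ω 𝒳 : Type*} [MeasurableSpace Ω] (P : Measure Ω)
    (X : Ω → 𝒳) (S A : Ω → Fin 2) (Y : Ω → ℝ) (a : Fin 2) (x : 𝒳) : ℝ :=
  eCond P {ω | X ω = x ∧ A ω = a ∧ S ω = 1} Y

/-- The observational potential-outcome signal
`ψ₁ᵃ = (1 / P(S=0 | X)) · [ 1{S=0}·μ_a(X) +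
1{S=1}·(P(S=0 | X)/P(S=1 | X))·1{A=a}(Y − μ_a(X))/P(A=a | X, S=1) ]`. -/
noncomputable def psi1a {Ω 𝒳 : Type*} [MeasurableSpace Ω] (P : Measure Ω)
    (X : Ω → 𝒳) (S A : Ω → Fin 2) (Y : Ω → ℝ) (a : Fin 2) (ω : Ω) : ℝ :=
  (1 / pCond P {ω' | S ω' = 0} {ω' | X ω' = X ω}) *
    ((if S ω = 0 then (1 : ℝ) else 0) * mu P X S A Y a (X ω) +
      (if S ω = 1 then (1 : ℝ) else 0) *
        (pCond P {ω' | S ω' = 0} {ω' | X ω' = X ω} /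
          pCond P {ω' | S ω' = 1} {ω' | X ω' = X ω}) *
        ((if A ω = a then (1 : ℝ) else 0) * (Y ω - mu P X S A Y a (X ω)) /
          pCond P {ω' | A ω' = a} {ω' | X ω' = X ω ∧ S ω' = 1}))

section Aux

variable {Ω : Type*} [MeasurableSpace Ω]

lemma fin2cases (v : Fin 2) : v = 0 ∨ v = 1 := by omega

lemma setIntegral_eq_eCond_mul (P : Measure Ω) [IsFiniteMeasure P] (E : Set Ω) (Z : Ω → ℝ) :
    ∫ ω in E, Z ω ∂P = eCond P E Z * (P E).toReal := by
  rcases eq_or_ne (P E) 0 with h | h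
  · have h0 : P.restrict E = 0 := Measure.restrict_eq_zero.mpr h
    simp [eCond, h0, h]
  · rw [eCond, div_mul_cancel₀]
    exact ENNReal.toReal_ne_zero.mpr ⟨h, measure_ne_top _ _⟩

end Aux

/-- Under internal validity of the RCT, internal validity of the
observational study, external validity (transportability of potential-outcome means), and
overlap, the vector signal difference satisfies the conditional moment restrictions:
for each `a ∈ {0,1}` and every `x` with `P(X=x) > 0`, `E[ψ₁ᵃ − ψ₀ᵃ | X=x] = 0`. -/
theorem potential_outcome_signal_difference_cmr
    {Ω 𝒳 : Type*} [MeasurableSpace Ω] [MeasurableSpace 𝒳]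
    [Countable 𝒳] [MeasurableSingletonClass 𝒳]
    (P : Measure Ω) [IsProbabilityMeasure P]
    (X : Ω → 𝒳) (S A : Ω → Fin 2) (Yp : Fin 2 → Ω → ℝ) (Y : Ω → ℝ)
    (hX : Measurable X) (hS : Measurable S) (hA : Measurable A)
    (hYp : ∀ a, Integrable (Yp a) P) (hY : Integrable Y P)
    (p : ℝ) (hp0 : 0 < p) (hp1 : p < 1)
    -- internal validity of the RCT:
    (consistencyRCT : ∀ a : Fin 2, ∀ᵐ ω ∂P, S ω = 0 → A ω = a → Y ω = Yp a ω)
    (ignorabilityRCT : ∀ a a' : Fin 2, ∀ x : 𝒳,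
      0 < P {ω | X ω = x ∧ S ω = 0 ∧ A ω = a'} →
      eCond P {ω | X ω = x ∧ S ω = 0 ∧ A ω = a'} (Yp a)
        = eCond P {ω | X ω = x ∧ S ω = 0} (Yp a))
    (fixedAssignment : ∀ x : 𝒳, 0 < P {ω | X ω = x ∧ S ω = 0} →
      pCond P {ω | A ω = 1} {ω | X ω = x ∧ S ω = 0} = p)
    -- internal validity of the observational study:
    (consistencyObs : ∀ a : Fin 2, ∀ᵐ ω ∂P, S ω = 1 → A ω = a → Y ω = Yp a ω)
    (ignorabilityObs : ∀ a a' : Fin 2, ∀ x : 𝒳,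
      0 < P {ω | X ω = x ∧ S ω = 1 ∧ A ω = a'} →
      eCond P {ω | X ω = x ∧ S ω = 1 ∧ A ω = a'} (Yp a)
        = eCond P {ω | X ω = x ∧ S ω = 1} (Yp a))
    (posTreatment : ∀ a : Fin 2, ∀ x : 𝒳, 0 < P {ω | X ω = x ∧ S ω = 1} →
      0 < pCond P {ω | A ω = a} {ω | X ω = x ∧ S ω = 1})
    -- external validity (transportability of potential-outcome means):
    (transport : ∀ a : Fin 2, ∀ x : 𝒳,
      0 < P {ω | X ω = x ∧ S ω = 0} → 0 < P {ω | X ω = x ∧ S ω = 1} →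
      eCond P {ω | X ω = x ∧ S ω = 0} (Yp a) = eCond P {ω | X ω = x ∧ S ω = 1} (Yp a))
    (posSelection : ∀ x : 𝒳, 0 < P {ω | X ω = x ∧ S ω = 0} → 0 < P {ω | X ω = x ∧ S ω = 1})
    -- overlap:
    (overlap : ∀ x : 𝒳, 0 < P {ω | X ω = x} →
      0 < P {ω | X ω = x ∧ S ω = 0} ∧ 0 < P {ω | X ω = x ∧ S ω = 1}) :
    ∀ a : Fin 2, ∀ x : 𝒳, 0 < P {ω | X ω = x} →
      eCond P {ω | X ω = x} (fun ω => psi1a P X S A Y a ω - psi0a P X S A Y a ω) = 0 := by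
  intro a x hx
  -- measurability
  have hE : MeasurableSet {ω | X ω = x} := hX (measurableSet_singleton x)
  have hS0 : MeasurableSet {ω | S ω = 0} := hS (measurableSet_singleton 0)
  have hS1 : MeasurableSet {ω | S ω = 1} := hS (measurableSet_singleton 1)
  have hAa : MeasurableSet {ω | A ω = a} := hA (measurableSet_singleton a)
  have hA1 : MeasurableSet {ω | A ω = 1} := hA (measurableSet_singleton 1)
  have hq : 0 < (P {ω | X ω = x}).toReal := ENNReal.toReal_pos hx.ne' (measure_ne_top _ _)
  obtain ⟨h0pos, h1pos⟩ := overlap x hx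
  have hq0 : 0 < (P {ω | X ω = x ∧ S ω = 0}).toReal :=
    ENNReal.toReal_pos h0pos.ne' (measure_ne_top _ _)
  have hq1 : 0 < (P {ω | X ω = x ∧ S ω = 1}).toReal :=
    ENNReal.toReal_pos h1pos.ne' (measure_ne_top _ _)
  have hglobS0pos : 0 < P {ω | S ω = 0} :=
    lt_of_lt_of_le h0pos (measure_mono (fun ω h => h.2))
  have hqS0 : 0 < (P {ω | S ω = 0}).toReal :=
    ENNReal.toReal_pos hglobS0pos.ne' (measure_ne_top _ _)
  -- constants
  set c0 := pCond P {ω' | S ω' = 0} {ω' | X ω' = x} with hc0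
  set c1 := pCond P {ω' | S ω' = 1} {ω' | X ω' = x} with hc1
  set ev := pCond P {ω' | A ω' = a} {ω' | X ω' = x ∧ S ω' = 1} with hev
  set pa := pCond P {ω' | A ω' = a} {ω' | S ω' = 0} with hpa
  set m := mu P X S A Y a x with hm
  -- basic set identities
  have eS0 : {ω | S ω = 0} ∩ {ω | X ω = x} = {ω | X ω = x ∧ S ω = 0} := by
    ext ω; exact and_comm
  have eS1 : {ω | S ω = 1} ∩ {ω | X ω = x} = {ω | X ω = x ∧ S ω = 1} := by
    ext ω; exact and_comm
  have eAa1 : {ω | A ω = a} ∩ {ω | X ω = x ∧ S ω = 1} = {ω | X ω = x ∧ S ω = 1 ∧ A ω = a} := by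
    ext ω; constructor
    · rintro ⟨h1, h2, h3⟩; exact ⟨h2, h3, h1⟩
    · rintro ⟨h1, h2, h3⟩; exact ⟨h3, h1, h2⟩
  have eAa0 : {ω | A ω = a} ∩ {ω | X ω = x ∧ S ω = 0} = {ω | X ω = x ∧ S ω = 0 ∧ A ω = a} := by
    ext ω; constructor
    · rintro ⟨h1, h2, h3⟩; exact ⟨h2, h3, h1⟩
    · rintro ⟨h1, h2, h3⟩; exact ⟨h3, h1, h2⟩
  -- constant values
  have hc0v : c0 * (P {ω | X ω = x}).toReal = (P {ω | X ω = x ∧ S ω = 0}).toReal := by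
    rw [hc0, pCond, eS0, div_mul_cancel₀ _ hq.ne']
  have hc1v : c1 * (P {ω | X ω = x}).toReal = (P {ω | X ω = x ∧ S ω = 1}).toReal := by
    rw [hc1, pCond, eS1, div_mul_cancel₀ _ hq.ne']
  have hc0pos : 0 < c0 := by
    rw [hc0, pCond, eS0]; exact div_pos hq0 hq
  have hc1pos : 0 < c1 := by
    rw [hc1, pCond, eS1]; exact div_pos hq1 hq
  have hevpos : 0 < ev := posTreatment a x h1pos
  have hevv : ev * (P {ω | X ω = x ∧ S ω = 1}).toReal
      = (P {ω | X ω = x ∧ S ω = 1 ∧ A ω = a}).toReal := by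
    rw [hev, pCond, eAa1, div_mul_cancel₀ _ hq1.ne']
  have hD1pos : 0 < P {ω | X ω = x ∧ S ω = 1 ∧ A ω = a} := by
    rcases eq_or_ne (P {ω | X ω = x ∧ S ω = 1 ∧ A ω = a}) 0 with h | h
    · exfalso
      have h' : (P {ω | X ω = x ∧ S ω = 1 ∧ A ω = a}).toReal = 0 := by rw [h]; simp
      rw [h'] at hevv
      linarith [mul_pos hevpos hq1]
    · exact pos_iff_ne_zero.mpr h
  have hqD1 : 0 < (P {ω | X ω = x ∧ S ω = 1 ∧ A ω = a}).toReal :=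
    ENNReal.toReal_pos hD1pos.ne' (measure_ne_top _ _)
  -- the fixed assignment probability transfers to the marginal over x
  have hpart : ∀ T : Set Ω, MeasurableSet T →
      P T = ∑' x' : 𝒳, P ({ω | X ω = x'} ∩ T) := by
    intro T hT
    have hU : T = ⋃ x' : 𝒳, ({ω | X ω = x'} ∩ T) := by
      ext ω; simp
    have hdisj : Pairwise (Function.onFun Disjoint fun x' : 𝒳 => {ω | X ω = x'} ∩ T) := by
      intro i j hij
      simp only [Function.onFun, Set.disjoint_left]
      rintro ω ⟨hi, _⟩ ⟨hj, _⟩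
      exact hij (hi.symm.trans hj)
    nth_rewrite 1 [hU]
    exact measure_iUnion hdisj fun x' => (hX (measurableSet_singleton x')).inter hT
  have hkey : P ({ω | A ω = 1} ∩ {ω | S ω = 0}) = ENNReal.ofReal p * P {ω | S ω = 0} := by
    have h1 := hpart ({ω | A ω = 1} ∩ {ω | S ω = 0}) (hA1.inter hS0)
    have h2 := hpart {ω | S ω = 0} hS0
    rw [h1, h2, ← ENNReal.tsum_mul_left]
    refine tsum_congr fun x' => ?_
    rcases eq_or_ne (P ({ω | X ω = x'} ∩ {ω | S ω = 0})) 0 with h | h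
    · have h' : P ({ω | X ω = x'} ∩ ({ω | A ω = 1} ∩ {ω | S ω = 0})) = 0 := by
        refine measure_mono_null ?_ h
        intro ω hw
        simp only [Set.mem_inter_iff, Set.mem_setOf_eq] at hw ⊢
        exact ⟨hw.1, hw.2.2⟩
      rw [h', h, mul_zero]
    · have hpos : 0 < P {ω | X ω = x' ∧ S ω = 0} := pos_iff_ne_zero.mpr h
      have hden : 0 < (P {ω | X ω = x' ∧ S ω = 0}).toReal :=
        ENNReal.toReal_pos hpos.ne' (measure_ne_top _ _)
      have hfa := fixedAssignment x' hpos
      rw [pCond, div_eq_iff hden.ne'] at hfa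
      have hset : {ω | X ω = x'} ∩ ({ω | A ω = 1} ∩ {ω | S ω = 0})
          = {ω | A ω = 1} ∩ {ω | X ω = x' ∧ S ω = 0} := by
        ext ω; constructor
        · rintro ⟨h1, h2, h3⟩; exact ⟨h2, h1, h3⟩
        · rintro ⟨h1, h2, h3⟩; exact ⟨h2, h1, h3⟩
      rw [hset]
      rw [← ENNReal.ofReal_toReal (measure_ne_top P ({ω | A ω = 1} ∩ {ω | X ω = x' ∧ S ω = 0})),
        hfa, ENNReal.ofReal_mul hp0.le,
        ENNReal.ofReal_toReal (measure_ne_top P {ω | X ω = x' ∧ S ω = 0})]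
      rfl
  have hpaglob : pCond P {ω | A ω = 1} {ω | S ω = 0} = p := by
    rw [pCond, hkey, ENNReal.toReal_mul, ENNReal.toReal_ofReal hp0.le, mul_div_assoc,
      div_self hqS0.ne', mul_one]
  -- complement for A
  have hcompl : ∀ F : Set Ω, MeasurableSet F → 0 < P F →
      pCond P {ω | A ω = 0} F = 1 - pCond P {ω | A ω = 1} F := by
    intro F hF hFpos
    have hsplit : P ({ω | A ω = 0} ∩ F) + P ({ω | A ω = 1} ∩ F) = P F := by
      rw [← measure_union ?_ (hA1.inter hF)]
      · congr 1
        ext ω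
        simp only [Set.mem_union, Set.mem_inter_iff, Set.mem_setOf_eq]
        constructor
        · rintro (⟨_, h⟩ | ⟨_, h⟩) <;> exact h
        · intro hω
          rcases fin2cases (A ω) with h | h
          · exact Or.inl ⟨h, hω⟩
          · exact Or.inr ⟨h, hω⟩
      · rw [Set.disjoint_left]
        rintro ω ⟨h0, _⟩ ⟨h1, _⟩
        exact absurd ((show A ω = 0 from h0).symm.trans (show A ω = 1 from h1)) (by decide)
    have hts := congrArg ENNReal.toReal hsplit
    rw [ENNReal.toReal_add (measure_ne_top _ _) (measure_ne_top _ _)] at hts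
    have hFd : 0 < (P F).toReal := ENNReal.toReal_pos hFpos.ne' (measure_ne_top _ _)
    rw [pCond, pCond, eq_sub_iff_add_eq, ← add_div, div_eq_one_iff_eq hFd.ne']
    exact hts
  -- pa facts
  have hpaE0 : pCond P {ω | A ω = a} {ω | X ω = x ∧ S ω = 0} = pa := by
    rcases fin2cases a with ha | ha <;> subst ha
    · rw [hcompl {ω | X ω = x ∧ S ω = 0} (hE.inter hS0) h0pos, hpa,
        hcompl {ω | S ω = 0} hS0 hglobS0pos, fixedAssignment x h0pos, hpaglob]
    · rw [hpa, fixedAssignment x h0pos, hpaglob]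
  have hpapos : 0 < pa := by
    rcases fin2cases a with ha | ha <;> rw [hpa, ha]
    · rw [hcompl {ω | S ω = 0} hS0 hglobS0pos, hpaglob]; linarith
    · rw [hpaglob]; exact hp0
  have hpav : pa * (P {ω | X ω = x ∧ S ω = 0}).toReal
      = (P {ω | X ω = x ∧ S ω = 0 ∧ A ω = a}).toReal := by
    rw [← hpaE0, pCond, eAa0, div_mul_cancel₀ _ hq0.ne']
  have hD0pos : 0 < P {ω | X ω = x ∧ S ω = 0 ∧ A ω = a} := by
    rcases eq_or_ne (P {ω | X ω = x ∧ S ω = 0 ∧ A ω = a}) 0 with h | h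
    · exfalso
      have h' : (P {ω | X ω = x ∧ S ω = 0 ∧ A ω = a}).toReal = 0 := by rw [h]; simp
      rw [h'] at hpav
      linarith [mul_pos hpapos hq0]
    · exact pos_iff_ne_zero.mpr h
  have hqD0 : 0 < (P {ω | X ω = x ∧ S ω = 0 ∧ A ω = a}).toReal :=
    ENNReal.toReal_pos hD0pos.ne' (measure_ne_top _ _)
  -- the mean chain: eCond on both treated cells equals m
  have hMval : eCond P {ω | X ω = x ∧ S ω = 1 ∧ A ω = a} Y = m := by
    have hset : {ω | X ω = x ∧ S ω = 1 ∧ A ω = a} = {ω | X ω = x ∧ A ω = a ∧ S ω = 1} := by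
      ext ω; exact ⟨fun ⟨h1, h2, h3⟩ => ⟨h1, h3, h2⟩, fun ⟨h1, h2, h3⟩ => ⟨h1, h3, h2⟩⟩
    rw [hset, hm, mu]
  have hD1Yp : eCond P {ω | X ω = x ∧ S ω = 1 ∧ A ω = a} (Yp a)
      = eCond P {ω | X ω = x ∧ S ω = 1 ∧ A ω = a} Y := by
    have hmeas : MeasurableSet {ω | X ω = x ∧ S ω = 1 ∧ A ω = a} := by
      exact hE.inter (hS1.inter hAa)
    rw [eCond, eCond]
    congr 1
    refine setIntegral_congr_ae hmeas ?_
    filter_upwards [consistencyObs a] with ω hcons hmem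
    exact (hcons hmem.2.1 hmem.2.2).symm
  have hD0val : eCond P {ω | X ω = x ∧ S ω = 0 ∧ A ω = a} Y = m := by
    have hmeas : MeasurableSet {ω | X ω = x ∧ S ω = 0 ∧ A ω = a} := by
      exact hE.inter (hS0.inter hAa)
    have step1 : eCond P {ω | X ω = x ∧ S ω = 0 ∧ A ω = a} Y
        = eCond P {ω | X ω = x ∧ S ω = 0 ∧ A ω = a} (Yp a) := by
      rw [eCond, eCond]
      congr 1
      refine setIntegral_congr_ae hmeas ?_
      filter_upwards [consistencyRCT a] with ω hcons hmem
      exact hcons hmem.2.1 hmem.2.2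
    rw [step1, ignorabilityRCT a a x hD0pos, transport a x h0pos h1pos,
      ← ignorabilityObs a a x hD1pos, hD1Yp, hMval]
  -- set integrals of Y over the treated cells
  have hI1 : ∫ ω in {ω | X ω = x ∧ S ω = 1 ∧ A ω = a}, Y ω ∂P
      = m * (P {ω | X ω = x ∧ S ω = 1 ∧ A ω = a}).toReal := by
    rw [setIntegral_eq_eCond_mul, hMval]
  have hI0 : ∫ ω in {ω | X ω = x ∧ S ω = 0 ∧ A ω = a}, Y ω ∂P
      = m * (P {ω | X ω = x ∧ S ω = 0 ∧ A ω = a}).toReal := by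
    rw [setIntegral_eq_eCond_mul, hD0val]
  -- pointwise identification of the integrand on {X = x}
  have hEqOn : Set.EqOn (fun ω => psi1a P X S A Y a ω - psi0a P X S A Y a ω)
      (fun ω =>
        ({ω' | S ω' = 0}).indicator (fun _ => m / c0) ω
        + ({ω' | S ω' = 1 ∧ A ω' = a}).indicator (fun ω' => (1 / (c1 * ev)) * (Y ω' - m)) ω
        - ({ω' | S ω' = 0 ∧ A ω' = a}).indicator (fun ω' => (1 / (c0 * pa)) * Y ω') ω)
      {ω | X ω = x} := by
    intro ω hω
    have hXω : X ω = x := hω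
    simp only [psi1a, psi0a, hXω, Set.indicator_apply, Set.mem_setOf_eq, ← hc0, ← hc1, ← hev,
      ← hpa, ← hm]
    have hc0' : c0 ≠ 0 := hc0pos.ne'
    have hc1' : c1 ≠ 0 := hc1pos.ne'
    have hev' : ev ≠ 0 := hevpos.ne'
    have hpa' : pa ≠ 0 := hpapos.ne'
    rcases fin2cases (S ω) with hs | hs <;> by_cases ha : A ω = a <;>
      simp [hs, ha] <;> field_simp <;> (first | exact Or.inl (mul_comm _ _) | ring)
  -- integrability
  have hind1 : Integrable (({ω' | S ω' = 0}).indicator (fun _ => m / c0)) P :=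
    (integrable_const _).indicator hS0
  have hind2 : Integrable
      (({ω' | S ω' = 1 ∧ A ω' = a}).indicator fun ω' => (1 / (c1 * ev)) * (Y ω' - m)) P :=
    ((hY.sub (integrable_const m)).const_mul _).indicator (hS1.inter hAa)
  have hind3 : Integrable
      (({ω' | S ω' = 0 ∧ A ω' = a}).indicator fun ω' => (1 / (c0 * pa)) * Y ω') P :=
    (hY.const_mul _).indicator (hS0.inter hAa)
  -- compute the set integral
  have hI : ∫ ω in {ω | X ω = x}, (psi1a P X S A Y a ω - psi0a P X S A Y a ω) ∂P = 0 := by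
    rw [setIntegral_congr_fun hE hEqOn]
    have haddInt : IntegrableOn (fun ω =>
        ({ω' | S ω' = 0}).indicator (fun _ => m / c0) ω
        + ({ω' | S ω' = 1 ∧ A ω' = a}).indicator (fun ω' => (1 / (c1 * ev)) * (Y ω' - m)) ω)
        {ω | X ω = x} P := hind1.integrableOn.add hind2.integrableOn
    rw [integral_sub haddInt hind3.integrableOn,
      integral_add hind1.integrableOn hind2.integrableOn,
      setIntegral_indicator hS0,
      setIntegral_indicator (show MeasurableSet {ω' | S ω' = 1 ∧ A ω' = a} from hS1.inter hAa),
      setIntegral_indicator (show MeasurableSet {ω' | S ω' = 0 ∧ A ω' = a} from hS0.inter hAa)]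
    have t0 : {ω | X ω = x} ∩ {ω' | S ω' = 0} = {ω | X ω = x ∧ S ω = 0} := rfl
    have t1 : {ω | X ω = x} ∩ {ω' | S ω' = 1 ∧ A ω' = a}
        = {ω | X ω = x ∧ S ω = 1 ∧ A ω = a} := rfl
    have t2 : {ω | X ω = x} ∩ {ω' | S ω' = 0 ∧ A ω' = a}
        = {ω | X ω = x ∧ S ω = 0 ∧ A ω = a} := rfl
    rw [t0, t1, t2, setIntegral_const, integral_const_mul, integral_const_mul,
      integral_sub hY.integrableOn (integrable_const m).integrableOn,
      setIntegral_const, hI1, hI0, smul_eq_mul, smul_eq_mul]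
    simp only [measureReal_def]
    rw [← hevv, ← hpav, ← hc0v, ← hc1v]
    field_simp
    ring
  rw [eCond]
  simp only [hI, zero_div]
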